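/- Define B_1 = C_2 and B_k = B_{k-1} ≀ C_2 for k > 1, and define G_1 = {e}, G_k = {(g_1,g_2)π ∈ B_k : g_1 g_2 ∈ G_{k-1}} for k > 1. Then the commutator subgroup B_k' is contained in G_k. -/

import Mathlib

/-- The cyclic shift action of `C_p = ZMod p` on the direct power `B^p`. -/
def cycShift (B : Type*) [Group B] (p : ℕ) :
    Multiplicative (ZMod p) →* MulAut (ZMod p → B) where
  toFun k := MulEquiv.arrowCongr (Equiv.addRight (Multiplicative.toAdd k)) (MulEquiv.refl B)
  map_one' := by
    ext f i
    simp [MulEquiv.arrowCongr, Equiv.Perm.one_symm, Equiv.Perm.one_apply]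
  map_mul' a b := by
    ext f i
    simp only [MulEquiv.arrowCongr, Equiv.coe_addRight, MulEquiv.coe_mk, Equiv.coe_fn_mk,
      MulEquiv.refl_apply, toAdd_mul, MulAut.mul_apply]
    congr 1
    simp only [Equiv.addRight_symm, Equiv.coe_addRight]
    abel

/-- The permutational wreath product `B ≀ C_p` with `C_p` acting on `p` points by cyclic shift. -/
abbrev Wr (B : Type*) [Group B] (p : ℕ) : Type _ :=
  (ZMod p → B) ⋊[cycShift B p] Multiplicative (ZMod p)

/-- `BBgrp k` is the group `B_{k+1}`, the `(k+1)`-fold iterated wreath product of `C_2`: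
`BBgrp 0 = C_2` and `BBgrp (k+1) = BBgrp k ≀ C_2`.  It is (isomorphic to) a Sylow
2-subgroup of `S_{2^(k+1)}`. -/
def BBgrp : ℕ → GrpCat
  | 0 => GrpCat.of (Multiplicative (ZMod 2))
  | k + 1 => GrpCat.of (Wr (BBgrp k) 2)

/-- `GGset k` is the subset `G_{k+1}` of `B_{k+1} = BBgrp k`: `GGset 0 = {1}` and
`GGset (k+1) = {(g₁,g₂)π : g₁ * g₂ ∈ GGset k}`. -/
def GGset : (k : ℕ) → Set (BBgrp k)
  | 0 => {1}
  | k + 1 => {x : Wr (BBgrp k) 2 | x.left 0 * x.left 1 ∈ GGset k}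

lemma cycShift_apply (B : Type*) [Group B] (r : Multiplicative (ZMod 2)) (f : ZMod 2 → B)
    (i : ZMod 2) : (cycShift B 2 r f) i = f (i - Multiplicative.toAdd r) := by
  simp [cycShift, MulEquiv.arrowCongr, sub_eq_add_neg]

def bbhom : (k : ℕ) → (BBgrp k →* Multiplicative (ZMod 2))
  | 0 => MonoidHom.id _
  | k + 1 =>
    { toFun := fun x : Wr (BBgrp k) 2 => bbhom k (x.left 0) * bbhom k (x.left 1)
      map_one' := by
        show bbhom k ((1 : Wr (BBgrp k) 2).left 0) * bbhom k ((1 : Wr (BBgrp k) 2).left 1) = 1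
        simp
      map_mul' := by
        intro x y
        show bbhom k ((x * y).left 0) * bbhom k ((x * y).left 1) = _
        have h : (x * y).left = x.left * cycShift (BBgrp k) 2 x.right y.left := rfl
        have h0 : (x * y).left 0 = x.left 0 * y.left (0 - Multiplicative.toAdd x.right) := by
          rw [h]; simp [cycShift_apply]
        have h1 : (x * y).left 1 = x.left 1 * y.left (1 - Multiplicative.toAdd x.right) := by
          rw [h]; simp [cycShift_apply]
        rw [h0, h1, map_mul, map_mul]
        have hr2 : ∀ r : ZMod 2, r = 0 ∨ r = 1 := by decide
        rcases hr2 (Multiplicative.toAdd x.right) with hr | hr <;>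
          rw [hr] <;>
          simp only [sub_zero, zero_sub, sub_self, (by decide : (-1 : ZMod 2) = 1),
            (by decide : (1 : ZMod 2) - 1 = 0)] <;>
          simp only [mul_comm, mul_left_comm, mul_assoc] }

lemma bbhom_ker : ∀ (k : ℕ) (x : BBgrp k), bbhom k x = 1 → x ∈ GGset k
  | 0, x, hx => hx
  | k + 1, x, hx => by
    have : bbhom k ((x : Wr (BBgrp k) 2).left 0 * (x : Wr (BBgrp k) 2).left 1) = 1 := by
      rw [map_mul]; exact hx
    exact bbhom_ker k _ this

/-- the commutator subgroup `B_k'` is contained in `G_k`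
(indexing: `BBgrp k` is `B_{k+1}` and `GGset k` is `G_{k+1}`, `k ≥ 0`). -/
theorem commutator_BB_subset_GG (k : ℕ) :
    ((commutator (BBgrp k) : Subgroup (BBgrp k)) : Set (BBgrp k)) ⊆ GGset k := by
  intro x hx
  exact bbhom_ker k x (Abelianization.commutator_subset_ker (bbhom k) hx)
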